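/- Let X ⊆ ℝⁿ be a closed, convex, unbounded set. Then C∞X ∩ Sⁿ⁻¹ is nonempty, and for a linear map F : ℝⁿ → ℝᵐ, if F(v) ≠ 0 for every v ∈ C∞X with ‖v‖ = 1, then F(X) is closed. -/

import Mathlib

open Filter Topology

noncomputable section

/-- The tangent cone at infinity (asymptotic cone) of a set `X ⊆ ℝⁿ`. -/
def coneAtInfty {n : ℕ} (X : Set (EuclideanSpace ℝ (Fin n))) :
    Set (EuclideanSpace ℝ (Fin n)) :=
  {v | ∃ (x : ℕ → EuclideanSpace ℝ (Fin n)) (t : ℕ → ℝ),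
    (∀ k, x k ∈ X) ∧ (∀ k, 0 < t k) ∧
    Tendsto (fun k => ‖x k‖) atTop atTop ∧
    Tendsto (fun k => t k • x k) atTop (𝓝 v)}

lemma aux_cone {n : ℕ} {X : Set (EuclideanSpace ℝ (Fin n))}
    (b : ℕ → EuclideanSpace ℝ (Fin n))
    (hb : ∀ k, b k ∈ X) (hn : ∀ k : ℕ, (k : ℝ) < ‖b k‖) :
    ∃ v ∈ coneAtInfty X ∩ Metric.sphere 0 1, ∃ φ : ℕ → ℕ, StrictMono φ ∧
      Tendsto (fun k => ‖b (φ k)‖⁻¹ • b (φ k)) atTop (𝓝 v) := by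
  have hpos : ∀ k, (0:ℝ) < ‖b k‖ := fun k => lt_of_le_of_lt (Nat.cast_nonneg k) (hn k)
  have hu : ∀ k, ‖b k‖⁻¹ • b k ∈ Metric.sphere (0 : EuclideanSpace ℝ (Fin n)) 1 := by
    intro k
    simp [mem_sphere_zero_iff_norm, norm_smul, abs_of_pos (inv_pos.2 (hpos k)),
      inv_mul_cancel₀ (hpos k).ne']
  obtain ⟨v, hv, φ, hφ, hlim⟩ :=
    (isCompact_sphere (0 : EuclideanSpace ℝ (Fin n)) 1).tendsto_subseq hu
  have htop : Tendsto (fun k => ‖b (φ k)‖) atTop atTop := by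
    apply tendsto_atTop_mono
      (fun k => le_of_lt (lt_of_le_of_lt (Nat.cast_le.2 (hφ.id_le k)) (hn (φ k))))
    exact tendsto_natCast_atTop_atTop
  exact ⟨v, ⟨⟨fun k => b (φ k), fun k => ‖b (φ k)‖⁻¹, fun k => hb _,
    fun k => inv_pos.2 (hpos _), htop, hlim⟩, hv⟩, φ, hφ, hlim⟩

theorem convex_coneAtInfty_closed_image {n m : ℕ}
    (X : Set (EuclideanSpace ℝ (Fin n))) (hX : IsClosed X) (hconv : Convex ℝ X)
    (hub : ∀ R : ℝ, ∃ x ∈ X, R < ‖x‖) :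
    (coneAtInfty X ∩ Metric.sphere 0 1).Nonempty ∧
    ∀ F : EuclideanSpace ℝ (Fin n) →ₗ[ℝ] EuclideanSpace ℝ (Fin m),
      (∀ v ∈ coneAtInfty X, ‖v‖ = 1 → F v ≠ 0) → IsClosed (F '' X) := by
  constructor
  · choose x hxX hxnorm using fun k : ℕ => hub k
    obtain ⟨v, hv, -⟩ := aux_cone x hxX hxnorm
    exact ⟨v, hv⟩
  · intro F hF
    have hFc : Continuous F := F.continuous_of_finiteDimensional
    rw [← isSeqClosed_iff_isClosed]
    intro s p hs hp
    choose a haX haF using hs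
    by_cases hbdd : ∀ C : ℝ, ∃ j, C < ‖a j‖
    · exfalso
      choose j hj using fun k : ℕ => hbdd k
      obtain ⟨v, ⟨hvc, hvs⟩, φ, hφ, hlim⟩ :=
        aux_cone (fun k => a (j k)) (fun k => haX _) hj
      have hv1 : ‖v‖ = 1 := by simpa [mem_sphere_zero_iff_norm] using hvs
      apply hF v hvc hv1
      have h1 : Tendsto (fun k => F (‖a (j (φ k))‖⁻¹ • a (j (φ k)))) atTop (𝓝 (F v)) :=
        (hFc.tendsto v).comp hlim
      have htop : Tendsto (fun k => ‖a (j (φ k))‖) atTop atTop := by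
        apply tendsto_atTop_mono
          (fun k => le_of_lt (lt_of_le_of_lt (Nat.cast_le.2 (hφ.id_le k)) (hj (φ k))))
        exact tendsto_natCast_atTop_atTop
      have hM : ∃ M, ∀ k, ‖s k‖ ≤ M := by
        obtain ⟨M, hMs⟩ := isBounded_iff_forall_norm_le.1
          (Metric.isBounded_range_of_tendsto s hp)
        exact ⟨M, fun k => hMs _ ⟨k, rfl⟩⟩
      obtain ⟨M, hM⟩ := hM
      have h2 : Tendsto (fun k => F (‖a (j (φ k))‖⁻¹ • a (j (φ k)))) atTop (𝓝 0) := by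
        rw [tendsto_zero_iff_norm_tendsto_zero]
        apply squeeze_zero (fun k => norm_nonneg _)
          (g := fun k => ‖a (j (φ k))‖⁻¹ * M)
        · intro k
          rw [map_smul, norm_smul, norm_inv, norm_norm, haF]
          exact mul_le_mul_of_nonneg_left (hM _)
            (inv_nonneg.2 (norm_nonneg _))
        · simpa using (tendsto_inv_atTop_zero.comp htop).mul_const M
      exact tendsto_nhds_unique h1 h2
    · push_neg at hbdd
      obtain ⟨C, hC⟩ := hbdd
      have hmem : ∀ k, a k ∈ Metric.closedBall (0 : EuclideanSpace ℝ (Fin n)) C := by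
        intro k; simpa [mem_closedBall_zero_iff] using hC k
      obtain ⟨x, hxball, φ, hφ, hlim⟩ :=
        (isCompact_closedBall (0 : EuclideanSpace ℝ (Fin n)) C).tendsto_subseq hmem
      have hxX : x ∈ X := hX.mem_of_tendsto hlim (Eventually.of_forall fun k => haX _)
      refine ⟨x, hxX, ?_⟩
      have h1 : Tendsto (fun k => F (a (φ k))) atTop (𝓝 (F x)) := (hFc.tendsto x).comp hlim
      have h2 : Tendsto (fun k => F (a (φ k))) atTop (𝓝 p) := by
        exact (hp.comp hφ.tendsto_atTop).congr (fun k => (haF (φ k)).symm)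
      exact tendsto_nhds_unique h1 h2
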